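/- Let u, v, w ∈ ℤ with w > 0, u² - 4vw < 0 and gcd(u,v,w) = 1. For integers α, β, γ, η with α, β ≥ 0: the equation αβ - γ(γ + uη) = vwη² holds if and only if there exist a, b, c, d ∈ ℚ and k ∈ ℚ with k·(wa² - uac + vc²) = α, k·(wb² - ubd + vd²) = β, k·(wab - uad + vcd) = γ, and k·(ad - bc) = η. -/

import Mathlib

/-- Theorem 3 of the paper, coordinate form: for coprime
`u, v, w` with `w > 0`, `u² - 4vw < 0`, and integers `α, β, γ, η` with
`α, β ≥ 0`, the Diophantine condition `αβ - γ(γ + uη) = vwη²` holds iff the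
quadratic system admits a rational solution. -/
theorem characterization_dim2
    (u v w : ℤ) (hw : 0 < w) (hdisc : u ^ 2 - 4 * v * w < 0)
    (hcop : Int.gcd u (Int.gcd v w) = 1)
    (α β γ η : ℤ) (hα : 0 ≤ α) (hβ : 0 ≤ β) :
    α * β - γ * (γ + u * η) = v * w * η ^ 2 ↔
    ∃ a b c d k : ℚ,
      k * (w * a ^ 2 - u * a * c + v * c ^ 2) = α ∧
      k * (w * b ^ 2 - u * b * d + v * d ^ 2) = β ∧
      k * (w * a * b - u * a * d + v * c * d) = γ ∧
      k * (a * d - b * c) = η := by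
  have hw0 : (w : ℚ) ≠ 0 := by exact_mod_cast hw.ne'
  constructor
  · intro h
    by_cases hα0 : α = 0
    · subst hα0
      have hη : η = 0 := by nlinarith [sq_nonneg (2 * γ + u * η), sq_nonneg η]
      subst hη
      have hγ : γ = 0 := by
        have h2 : γ ^ 2 = 0 := by linear_combination -h
        exact pow_eq_zero_iff two_ne_zero |>.mp h2
      refine ⟨0, 1, 0, 0, (β : ℚ) / w, ?_, ?_, ?_, ?_⟩ <;>
        (push_cast [hγ]; field_simp; ring)
    · have hαQ : (α : ℚ) ≠ 0 := by exact_mod_cast hα0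
      refine ⟨1, ((γ : ℚ) + u * η) / α, 0, (η : ℚ) * w / α, (α : ℚ) / w,
        ?_, ?_, ?_, ?_⟩
      · field_simp; ring
      · have hQ : (α : ℚ) * β - γ * (γ + u * η) = v * w * η ^ 2 := by
          exact_mod_cast congrArg (Int.cast : ℤ → ℚ) h
        field_simp
        linear_combination (-1 : ℚ) * hQ
      · field_simp; ring
      · field_simp; ring
  · rintro ⟨a, b, c, d, k, h1, h2, h3, h4⟩
    have : ((α : ℚ)) * β - γ * (γ + u * η) = v * w * η ^ 2 := by
      rw [← h1, ← h2, ← h3, ← h4]; ring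
    exact_mod_cast this
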